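/- For every integer n ≥ 5 and every i ∈ ℤ/nℤ, the group homomorphism from the Baumslag–Solitar group BS(1,2) to the generalised Higman group H_n determined by a ↦ a_i and b ↦ a_{i+1} is well defined (the relator a b a⁻¹ b⁻² is sent to the identity) and injective; in particular, the subgroup of H_n generated by a_i and a_{i+1} is isomorphic to BS(1,2). -/

import Mathlib

def higmanRels (n : ℕ) : Set (FreeGroup (ZMod n)) :=
  {r | ∃ i : ZMod n,
    r = FreeGroup.of i * FreeGroup.of (i + 1) * (FreeGroup.of i)⁻¹ * ((FreeGroup.of (i + 1))⁻¹) ^ 2}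

abbrev HigmanGroup (n : ℕ) : Type := PresentedGroup (higmanRels n)

def bsRels : Set (FreeGroup (Fin 2)) :=
  {FreeGroup.of 0 * FreeGroup.of 1 * (FreeGroup.of 0)⁻¹ * ((FreeGroup.of 1)⁻¹) ^ 2}

abbrev BS12 : Type := PresentedGroup bsRels

namespace Helper

abbrev FU := FreeGroup Unit

/-- every element of the free group on one generator is a power of the generator -/
lemma FU.eq_pow (x : FU) : ∃ n : ℤ, x = FreeGroup.of () ^ n :=
  ⟨FreeGroup.freeGroupUnitEquivInt x, (FreeGroup.freeGroupUnitEquivInt.left_inv x).symm⟩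

/-- hom from the free group on one generator determined by an element -/
def powHom {G : Type*} [Group G] (g : G) : FU →* G := FreeGroup.lift (fun _ => g)

@[simp] lemma powHom_of {G : Type*} [Group G] (g : G) : powHom g (FreeGroup.of ()) = g :=
  FreeGroup.lift_apply_of

lemma powHom_pow {G : Type*} [Group G] (g : G) (n : ℤ) :
    powHom g (FreeGroup.of () ^ n) = g ^ n := by
  rw [map_zpow, powHom_of]

lemma powHom_injective {G : Type*} [Group G] {g : G} (h : ∀ n : ℤ, g ^ n = 1 → n = 0) :
    Function.Injective (powHom (G := G) g) := by
  rw [injective_iff_map_eq_one]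
  intro x hx
  obtain ⟨n, rfl⟩ := FU.eq_pow x
  rw [powHom_pow] at hx
  rw [h n hx, zpow_zero]

lemma mem_powHom_range {G : Type*} [Group G] {g : G} {x : G} :
    x ∈ (powHom g).range ↔ ∃ n : ℤ, x = g ^ n := by
  constructor
  · rintro ⟨y, rfl⟩
    obtain ⟨n, rfl⟩ := FU.eq_pow y
    exact ⟨n, powHom_pow g n⟩
  · rintro ⟨n, rfl⟩
    exact ⟨FreeGroup.of () ^ n, (powHom_pow g n)⟩

/-! ### basics about `BS12` -/

/-- the generator `a` of `BS12` -/
def bsa : BS12 := PresentedGroup.of 0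
/-- the generator `b` of `BS12` -/
def bsb : BS12 := PresentedGroup.of 1

lemma bs_rel : bsa * bsb * bsa⁻¹ = bsb ^ 2 := by
  have h : (PresentedGroup.mk bsRels)
      (FreeGroup.of 0 * FreeGroup.of 1 * (FreeGroup.of 0)⁻¹ * ((FreeGroup.of 1)⁻¹) ^ 2) = 1 := by
    apply (QuotientGroup.eq_one_iff _).2
    exact Subgroup.subset_normalClosure rfl
  simp only [map_mul, map_inv, map_pow] at h
  have h2 : bsa * bsb * bsa⁻¹ * (bsb⁻¹) ^ 2 = 1 := h
  have := mul_eq_one_iff_eq_inv.1 h2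
  rw [this]
  group

/-- exponent-sum-of-`a` homomorphism -/
def bsσ : BS12 →* Multiplicative ℤ :=
  PresentedGroup.toGroup (f := ![Multiplicative.ofAdd (1 : ℤ), 1])
    (by
      rintro r rfl
      simp)

@[simp] lemma bsσ_a : bsσ bsa = Multiplicative.ofAdd (1 : ℤ) := by
  simp [bsσ, bsa, PresentedGroup.toGroup.of]

@[simp] lemma bsσ_b : bsσ bsb = 1 := by
  simp [bsσ, bsb, PresentedGroup.toGroup.of]

/-- the doubling permutation of `ℚ` -/
def dbl : Equiv.Perm ℚ :=
  ⟨fun x => 2 * x, fun x => x / 2, fun x => by field_simp, fun x => by field_simp⟩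

@[simp] lemma dbl_apply (x : ℚ) : dbl x = 2 * x := rfl
@[simp] lemma dbl_symm_apply (x : ℚ) : dbl⁻¹ x = x / 2 := rfl

/-- translations as a homomorphism -/
def trHom : Multiplicative ℚ →* Equiv.Perm ℚ where
  toFun q := Equiv.addLeft q.toAdd
  map_one' := by ext x; simp
  map_mul' p q := by ext x; simp [add_assoc]

@[simp] lemma trHom_apply (q : Multiplicative ℚ) (x : ℚ) : trHom q x = q.toAdd + x := rfl

/-- the translation permutation of `ℚ` -/
def tr : Equiv.Perm ℚ := trHom (Multiplicative.ofAdd 1)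

lemma tr_zpow (m : ℤ) : tr ^ m = trHom (Multiplicative.ofAdd (m : ℚ)) := by
  rw [tr, ← map_zpow]
  congr 1
  rw [← ofAdd_zsmul]
  norm_num

@[simp] lemma tr_apply (x : ℚ) : tr x = 1 + x := rfl
@[simp] lemma tr_inv_apply (x : ℚ) : tr⁻¹ x = -1 + x := by
  rw [tr, ← map_inv]
  simp [trHom]

/-- affine action of `BS12` on `ℚ` -/
def bsρ : BS12 →* Equiv.Perm ℚ :=
  PresentedGroup.toGroup (f := ![dbl, tr])
    (by
      rintro r rfl
      simp only [map_mul, map_inv, map_pow, FreeGroup.lift_apply_of, Matrix.cons_val_zero,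
        Matrix.cons_val_one, Matrix.head_cons]
      ext x
      simp only [Equiv.Perm.coe_mul, Function.comp_apply, pow_two, Equiv.Perm.one_apply,
        dbl_apply, dbl_symm_apply, tr_apply, tr_inv_apply]
      ring)

@[simp] lemma bsρ_a : bsρ bsa = dbl := by
  simp [bsρ, bsa, PresentedGroup.toGroup.of]

@[simp] lemma bsρ_b : bsρ bsb = tr := by
  simp [bsρ, bsb, PresentedGroup.toGroup.of]

lemma bsb_zpow_ne_one {m : ℤ} (hm : bsb ^ m = 1) : m = 0 := by
  have := congrArg bsρ hm
  rw [map_zpow, bsρ_b, tr_zpow] at this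
  have h0 := congrArg (fun e : Equiv.Perm ℚ => e 0) this
  simp at h0
  exact_mod_cast h0

lemma ofAdd_one_zpow (m : ℤ) : Multiplicative.ofAdd (1 : ℤ) ^ m = Multiplicative.ofAdd m := by
  rw [← ofAdd_zsmul]; simp

lemma bsa_zpow_ne_one {m : ℤ} (hm : bsa ^ m = 1) : m = 0 := by
  have := congrArg bsσ hm
  rw [map_zpow, bsσ_a, ofAdd_one_zpow, show bsσ 1 = 1 from map_one bsσ] at this
  simpa using this

/-- separation: powers of `a` and `b` only meet at 1 -/
lemma bs_sep {n m : ℤ} (h : bsa ^ n = bsb ^ m) : n = 0 ∧ m = 0 := by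
  have hσ := congrArg bsσ h
  rw [map_zpow, map_zpow, bsσ_a, bsσ_b, one_zpow] at hσ
  have hn : n = 0 := by
    rw [ofAdd_one_zpow] at hσ
    simpa using hσ
  subst hn
  rw [zpow_zero] at h
  exact ⟨rfl, bsb_zpow_ne_one h.symm⟩


/-! ### Two-factor amalgamated products -/

open Monoid

section Amal

variable {B X Y : Type} [Group B] [Group X] [Group Y]

/-- the two-element family of groups -/
def twoFam (X Y : Type) : Bool → Type := fun b => bif b then Y else X

instance twoFamGroup [Group X] [Group Y] : ∀ b, Group (twoFam X Y b)
  | false => ‹Group X›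
  | true => ‹Group Y›

/-- the legs of the two-fold pushout diagram -/
def twoLegs (f : B →* X) (g : B →* Y) : ∀ b, B →* twoFam X Y b
  | false => f
  | true => g

/-- amalgamated product of `X` and `Y` along `B` -/
def Amal (f : B →* X) (g : B →* Y) : Type := PushoutI (twoLegs f g)

instance (f : B →* X) (g : B →* Y) : Group (Amal f g) :=
  inferInstanceAs (Group (PushoutI _))

variable (f : B →* X) (g : B →* Y)

/-- inclusion of the left factor -/
def inX : X →* Amal f g := PushoutI.of (φ := twoLegs f g) false
/-- inclusion of the right factor -/
def inY : Y →* Amal f g := PushoutI.of (φ := twoLegs f g) true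

lemma amal_comm (z : B) : inX f g (f z) = inY f g (g z) :=
  (PushoutI.of_apply_eq_base (twoLegs f g) false z).trans
    (PushoutI.of_apply_eq_base (twoLegs f g) true z).symm

variable {T : Type} [Group T]

/-- the two homs as a family -/
def twoHoms (hX : X →* T) (hY : Y →* T) : ∀ b, twoFam X Y b →* T
  | false => hX
  | true => hY

/-- universal property of the amalgam -/
def amalLift (hX : X →* T) (hY : Y →* T) (h : hX.comp f = hY.comp g) : Amal f g →* T :=
  PushoutI.lift (twoHoms hX hY) (hX.comp f)
    (by rintro (_ | _)
        · rfl
        · exact h.symm ▸ rfl)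

@[simp] lemma amalLift_inX (hX : X →* T) (hY : Y →* T) (h : hX.comp f = hY.comp g) (x : X) :
    amalLift f g hX hY h (inX f g x) = hX x :=
  PushoutI.lift_of _ _ _ _

@[simp] lemma amalLift_inY (hX : X →* T) (hY : Y →* T) (h : hX.comp f = hY.comp g) (y : Y) :
    amalLift f g hX hY h (inY f g y) = hY y :=
  PushoutI.lift_of _ _ _ _

lemma amal_hom_ext {h₁ h₂ : Amal f g →* T}
    (hX : h₁.comp (inX f g) = h₂.comp (inX f g))
    (hY : h₁.comp (inY f g) = h₂.comp (inY f g)) : h₁ = h₂ := by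
  apply PushoutI.hom_ext_nonempty
  rintro (_ | _)
  · exact hX
  · exact hY

variable {f g}

lemma twoLegs_injective (hf : Function.Injective f) (hg : Function.Injective g) :
    ∀ b, Function.Injective (twoLegs f g b)
  | false => hf
  | true => hg

lemma inX_injective (hf : Function.Injective f) (hg : Function.Injective g) :
    Function.Injective (inX f g) :=
  PushoutI.of_injective (twoLegs_injective hf hg) false

lemma inY_injective (hf : Function.Injective f) (hg : Function.Injective g) :
    Function.Injective (inY f g) :=
  PushoutI.of_injective (twoLegs_injective hf hg) true

/-- if an element of `X` and an element of `Y` become equal in the amalgam, they come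
from the base -/
lemma amal_eq (hf : Function.Injective f) (hg : Function.Injective g) {x : X} {y : Y}
    (h : inX f g x = inY f g y) : ∃ z : B, x = f z ∧ y = g z := by
  have hmem : inX f g x ∈ (PushoutI.of (φ := twoLegs f g) false).range ⊓
      (PushoutI.of (φ := twoLegs f g) true).range := by
    refine ⟨⟨x, rfl⟩, ⟨y, h.symm⟩⟩
  rw [PushoutI.inf_of_range_eq_base_range (twoLegs_injective hf hg)
    (by decide : false ≠ true)] at hmem
  obtain ⟨z, hz⟩ := hmem
  have h1 : inX f g (f z) = inX f g x := by
    rw [show inX f g (f z) = PushoutI.base (twoLegs f g) z from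
      PushoutI.of_apply_eq_base (twoLegs f g) false z, hz]
  have h2 : inY f g (g z) = inY f g y := by
    rw [show inY f g (g z) = PushoutI.base (twoLegs f g) z from
      PushoutI.of_apply_eq_base (twoLegs f g) true z, hz, h]
  exact ⟨z, (inX_injective hf hg h1).symm, (inY_injective hf hg h2).symm⟩


/-! ### ping-pong: free subgroup generated by suitable elements of the two factors -/

open Monoid.PushoutI

noncomputable section

theorem amal_pairFree {X Y : Type} [Group X] [Group Y] (f : FU →* X) (g : FU →* Y)
    (hf : Function.Injective f) (hg : Function.Injective g) (x : X) (y : Y)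
    (hx : ∀ n : ℤ, n ≠ 0 → x ^ n ∉ f.range) (hy : ∀ n : ℤ, n ≠ 0 → y ^ n ∉ g.range) :
    Function.Injective (FreeGroup.lift
      (fun j : Fin 2 => if j = 0 then (inX f g x : Amal f g) else inY f g y)) := by
  classical
  obtain ⟨d⟩ := NormalWord.transversal_nonempty (twoLegs f g) (twoLegs_injective hf hg)
  letI : MulAction (Amal f g) (NormalWord d) :=
    inferInstanceAs (MulAction (PushoutI (twoLegs f g)) (NormalWord d))
  set a : Fin 2 → Amal f g := fun j => if j = 0 then inX f g x else inY f g y with ha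
  have ha0 : a 0 = inX f g x := by simp [ha]
  have ha1 : a 1 = inY f g y := by simp [ha]
  let F : ∀ _j : Fin 2, FU →* Amal f g := fun j => powHom (a j)
  let idx : Fin 2 → Bool := fun j => decide (j = 1)
  have idx_inj : Function.Injective idx := by decide
  let S : Fin 2 → Set (NormalWord d) := fun j => {w | w.fstIdx = some (idx j)}
  -- main smul lemma
  have main : ∀ (b : Bool) (c : twoFam X Y b), c ∉ (twoLegs f g b).range →
      ∀ w : NormalWord d, w.fstIdx ≠ some b →
      ((PushoutI.of (φ := twoLegs f g) b c • w).fstIdx = some b) := by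
    intro b c hc w hw
    rw [← NormalWord.cons_eq_smul c w hw hc]
    rfl
  have hane : ∀ (j : Fin 2) (n : ℤ), n ≠ 0 → ∀ w : NormalWord d, w.fstIdx ≠ some (idx j) →
      ((a j ^ n • w).fstIdx = some (idx j)) := by
    have hcases : ∀ j : Fin 2, j = 0 ∨ j = 1 := by decide
    intro j n hn w hw
    rcases hcases j with rfl | rfl
    · rw [ha0, ← map_zpow]
      exact main false (x ^ n) (hx n hn) w hw
    · rw [ha1, ← map_zpow]
      exact main true (y ^ n) (hy n hn) w hw
  have hfstIdx_empty : (NormalWord.empty (d := d)).fstIdx = none := rfl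
  have hinj : Function.Injective (CoprodI.lift F) := by
    apply CoprodI.lift_injective_of_ping_pong F ?_ S ?_ ?_ ?_
    · refine Or.inr ⟨0, ?_⟩
      exact le_trans (le_of_lt (Cardinal.nat_lt_aleph0 3)) (Cardinal.aleph0_le_mk FU)
    · intro j
      refine ⟨a j ^ (1 : ℤ) • NormalWord.empty, ?_⟩
      exact hane j 1 one_ne_zero _ (by rw [hfstIdx_empty]; exact fun h => nomatch h)
    · intro i j hij
      rw [Function.onFun, Set.disjoint_left]
      intro w hwi hwj
      exact hij (idx_inj (Option.some_injective _ (hwi.symm.trans hwj)))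
    · intro i j hij h hne
      obtain ⟨n, rfl⟩ := FU.eq_pow h
      have hn : n ≠ 0 := by
        rintro rfl
        exact hne (zpow_zero _)
      intro w' hw'
      obtain ⟨w, hw, rfl⟩ := hw'
      have : F i (FreeGroup.of () ^ n) = a i ^ n := powHom_pow _ _
      rw [this]
      refine hane i n hn w ?_
      rw [Set.mem_setOf_eq] at hw
      rw [hw]
      intro hc
      exact (hij.symm) (idx_inj (Option.some_injective _ hc))
  have hEq : FreeGroup.lift a =
      (CoprodI.lift F).comp (freeGroupEquivCoprodI (ι := Fin 2)).toMonoidHom := by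
    ext j
    simp [F, powHom]
  rw [hEq, MonoidHom.coe_comp]
  exact hinj.comp (MulEquiv.injective _)

end

end Amal


/-! ### Path groups: iterated amalgams of copies of BS(1,2) along a path -/

/-- hom `FU →* BS12` hitting the generator `a` -/
def bsaHom : FU →* BS12 := powHom bsa
/-- hom `FU →* BS12` hitting the generator `b` -/
def bsbHom : FU →* BS12 := powHom bsb

lemma bsaHom_injective : Function.Injective bsaHom :=
  powHom_injective (fun n h => (bs_sep (n := n) (m := 0) (by simpa using h)).1)

lemma bsbHom_injective : Function.Injective bsbHom :=
  powHom_injective (fun n h => (bs_sep (n := 0) (m := n) (by simpa using h.symm)).2)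

/-- hom `BS12 →* T` from images of the generators satisfying the relation -/
def bsToGroup {T : Type} [Group T] (u v : T) (huv : u * v * u⁻¹ = v ^ 2) : BS12 →* T :=
  PresentedGroup.toGroup (f := ![u, v])
    (by
      rintro r rfl
      simp only [map_mul, map_inv, map_pow, FreeGroup.lift_apply_of, Matrix.cons_val_zero,
        Matrix.cons_val_one, Matrix.head_cons]
      rw [show (v⁻¹) ^ 2 = (v ^ 2)⁻¹ by group, huv]
      group)

@[simp] lemma bsToGroup_a {T : Type} [Group T] (u v : T) (huv : u * v * u⁻¹ = v ^ 2) :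
    bsToGroup u v huv bsa = u := by
  simp [bsToGroup, bsa, PresentedGroup.toGroup.of]

@[simp] lemma bsToGroup_b {T : Type} [Group T] (u v : T) (huv : u * v * u⁻¹ = v ^ 2) :
    bsToGroup u v huv bsb = v := by
  simp [bsToGroup, bsb, PresentedGroup.toGroup.of]

/-- data of a path group: carrier, group structure, and images of the vertex generators -/
structure PGD : Type 1 where
  G : Type
  grp : Group G
  gens : ℕ → G

attribute [instance] PGD.grp

/-- one step of the iterated amalgam: attach a new copy of `BS12` at vertex `m` -/
def pgdStep (m : ℕ) (p : PGD) : PGD where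
  G := Amal (powHom (p.gens m)) bsaHom
  grp := inferInstance
  gens := fun j => if j ≤ m then inX (powHom (p.gens m)) bsaHom (p.gens j)
    else inY (powHom (p.gens m)) bsaHom bsb

/-- the path group with `k+1` edges and vertices `0, …, k+1` -/
def pgd : ℕ → PGD
  | 0 => ⟨BS12, inferInstance, fun j => if j = 0 then bsa else bsb⟩
  | (k+1) => pgdStep (k+1) (pgd k)

/-- inclusion of the path group into the next one -/
def stepInX (k : ℕ) : (pgd k).G →* (pgd (k+1)).G :=
  inX (powHom ((pgd k).gens (k+1))) bsaHom

/-- inclusion of the new `BS12` copy into the next path group -/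
def stepInY (k : ℕ) : BS12 →* (pgd (k+1)).G :=
  inY (powHom ((pgd k).gens (k+1))) bsaHom

lemma pgd_gens_zero_zero : (pgd 0).gens 0 = bsa := rfl

lemma pgd_gens_zero_pos {j : ℕ} (h : 1 ≤ j) : (pgd 0).gens j = bsb := by
  show (if j = 0 then bsa else bsb) = bsb
  rw [if_neg (by omega)]

lemma pgd_gens_succ_le (k : ℕ) {j : ℕ} (h : j ≤ k + 1) :
    (pgd (k+1)).gens j = stepInX k ((pgd k).gens j) := by
  show (if j ≤ k + 1 then _ else _) = _
  exact if_pos h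

lemma pgd_gens_succ_top (k : ℕ) {j : ℕ} (h : k + 2 ≤ j) :
    (pgd (k+1)).gens j = stepInY k bsb := by
  show (if j ≤ k + 1 then _ else _) = _
  exact if_neg (by omega)

lemma pgd_bridge (k : ℕ) : stepInX k ((pgd k).gens (k+1)) = stepInY k bsa := by
  have := amal_comm (powHom ((pgd k).gens (k+1))) bsaHom (FreeGroup.of ())
  simp [bsaHom] at this; exact this

lemma pgd_rel : ∀ (k : ℕ) (j : ℕ), j ≤ k →
    (pgd k).gens j * (pgd k).gens (j+1) * ((pgd k).gens j)⁻¹ = ((pgd k).gens (j+1)) ^ 2 := by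
  intro k
  induction k with
  | zero =>
    intro j hj
    interval_cases j
    rw [pgd_gens_zero_zero, pgd_gens_zero_pos le_rfl]
    exact bs_rel
  | succ k ih =>
    intro j hj
    rcases Nat.lt_or_ge j (k+1) with h | h
    · rw [pgd_gens_succ_le k (by omega), pgd_gens_succ_le k (by omega), ← map_inv, ← map_mul,
        ← map_mul, ih j (by omega), map_pow]
    · have hj' : j = k + 1 := by omega
      subst hj'
      rw [pgd_gens_succ_le k le_rfl, pgd_gens_succ_top k le_rfl, pgd_bridge k, ← map_inv,
        ← map_mul, ← map_mul, bs_rel, map_pow]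

lemma pgd_sep : ∀ (k : ℕ) {n m : ℤ},
    (pgd k).gens 0 ^ n = (pgd k).gens (k+1) ^ m → n = 0 ∧ m = 0 := by
  intro k
  induction k with
  | zero =>
    intro n m h
    rw [pgd_gens_zero_zero, pgd_gens_zero_pos le_rfl] at h
    exact bs_sep h
  | succ k ih =>
    intro n m h
    have hlast : Function.Injective (powHom ((pgd k).gens (k+1))) :=
      powHom_injective (fun t ht => (ih (n := 0) (m := t) (by simpa using ht.symm)).2)
    rw [pgd_gens_succ_le k (by omega), pgd_gens_succ_top k le_rfl, ← map_zpow, ← map_zpow] at h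
    obtain ⟨z, hz1, hz2⟩ := amal_eq hlast bsaHom_injective h
    obtain ⟨t, rfl⟩ := FU.eq_pow z
    rw [powHom_pow] at hz1
    have h1 := ih hz1
    rw [show bsaHom (FreeGroup.of () ^ t) = bsa ^ t from powHom_pow _ _] at hz2
    exact ⟨h1.1, (bs_sep hz2.symm).2⟩

/-- freeness of the subgroup generated by the two endpoints of a path with at least 2 edges -/
lemma pgd_free (k : ℕ) :
    Function.Injective (FreeGroup.lift (fun j : Fin 2 =>
      if j = 0 then (pgd (k+1)).gens 0 else (pgd (k+1)).gens (k+2))) := by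
  have hlast : Function.Injective (powHom ((pgd k).gens (k+1))) :=
    powHom_injective (fun t ht => (pgd_sep k (n := 0) (m := t) (by simpa using ht.symm)).2)
  have hx : ∀ n : ℤ, n ≠ 0 → ((pgd k).gens 0) ^ n ∉ (powHom ((pgd k).gens (k+1))).range := by
    intro n hn hmem
    obtain ⟨t, ht⟩ := mem_powHom_range.1 hmem
    exact hn (pgd_sep k ht).1
  have hy : ∀ n : ℤ, n ≠ 0 → (bsb : BS12) ^ n ∉ bsaHom.range := by
    intro n hn hmem
    obtain ⟨t, ht⟩ := mem_powHom_range.1 hmem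
    exact hn (bs_sep (n := t) (m := n) ht.symm).2
  have key := amal_pairFree (powHom ((pgd k).gens (k+1))) bsaHom hlast bsaHom_injective
    ((pgd k).gens 0) bsb hx hy
  have hfun : (fun j : Fin 2 => if j = 0 then (pgd (k+1)).gens 0 else (pgd (k+1)).gens (k+2)) =
      (fun j : Fin 2 => if j = 0 then
        inX (powHom ((pgd k).gens (k+1))) bsaHom ((pgd k).gens 0)
      else inY (powHom ((pgd k).gens (k+1))) bsaHom bsb) := by
    funext j
    split
    · rw [pgd_gens_succ_le k (by omega)]
      rfl
    · rw [pgd_gens_succ_top k le_rfl]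
      rfl
  rw [hfun]
  exact key


lemma fin2_cases : ∀ j : Fin 2, j = 0 ∨ j = 1 := by decide

/-- universal property of the path group, with the evaluation of the generators -/
def pgdToGroupAux (T : Type) [Group T] (t : ℕ → T)
    (ht : ∀ j, t j * t (j+1) * (t j)⁻¹ = (t (j+1)) ^ 2) :
    (k : ℕ) → {h : (pgd k).G →* T // ∀ j, j ≤ k + 1 → h ((pgd k).gens j) = t j}
  | 0 => ⟨bsToGroup (t 0) (t 1) (ht 0), by
      intro j hj
      interval_cases j
      · rw [pgd_gens_zero_zero]; exact bsToGroup_a _ _ _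
      · rw [pgd_gens_zero_pos le_rfl]; exact bsToGroup_b _ _ _⟩
  | (k+1) =>
    let prev := pgdToGroupAux T t ht k
    ⟨amalLift _ _ prev.1 (bsToGroup (t (k+1)) (t (k+2)) (ht (k+1)))
      (by
        refine FreeGroup.ext_hom _ _ (fun u => ?_)
        cases u
        simp only [MonoidHom.comp_apply]
        rw [show (powHom ((pgd k).gens (k+1))) (FreeGroup.of ()) = (pgd k).gens (k+1)
            from powHom_of _,
          show bsaHom (FreeGroup.of ()) = bsa from powHom_of _,
          prev.2 (k+1) (by omega), bsToGroup_a]),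
     by
      intro j hj
      rcases Nat.lt_or_ge j (k+2) with h | h
      · rw [pgd_gens_succ_le k (by omega)]
        exact (amalLift_inX _ _ _ _ _ _).trans (prev.2 j (by omega))
      · have hj' : j = k + 2 := by omega
        subst hj'
        rw [pgd_gens_succ_top k le_rfl]
        exact (amalLift_inY _ _ _ _ _ _).trans (bsToGroup_b _ _ _)⟩

/-- two homs out of a path group agreeing on the generators are equal -/
lemma pgd_hom_ext {T : Type} [Group T] : ∀ (k : ℕ) (h₁ h₂ : (pgd k).G →* T),
    (∀ j, j ≤ k + 1 → h₁ ((pgd k).gens j) = h₂ ((pgd k).gens j)) → h₁ = h₂ := by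
  intro k
  induction k with
  | zero =>
    intro h₁ h₂ hyp
    refine PresentedGroup.ext (fun x => ?_)
    rcases fin2_cases x with rfl | rfl
    · have := hyp 0 (by omega)
      rw [pgd_gens_zero_zero] at this
      exact this
    · have := hyp 1 (by omega)
      rw [pgd_gens_zero_pos le_rfl] at this
      exact this
  | succ k ih =>
    intro h₁ h₂ hyp
    refine amal_hom_ext _ _ ?_ ?_
    · refine ih _ _ (fun j hj => ?_)
      show h₁ (inX (powHom ((pgd k).gens (k+1))) bsaHom ((pgd k).gens j)) = h₂ (inX (powHom ((pgd k).gens (k+1))) bsaHom ((pgd k).gens j))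
      rw [show (inX (powHom ((pgd k).gens (k+1))) bsaHom) ((pgd k).gens j)
          = (pgd (k+1)).gens j from (pgd_gens_succ_le k hj).symm]
      exact hyp j (by omega)
    · refine PresentedGroup.ext (fun x => ?_)
      show h₁ (inY (powHom ((pgd k).gens (k+1))) bsaHom (PresentedGroup.of x)) = h₂ (inY (powHom ((pgd k).gens (k+1))) bsaHom (PresentedGroup.of x))
      rcases fin2_cases x with rfl | rfl
      · rw [show (inY (powHom ((pgd k).gens (k+1))) bsaHom) (PresentedGroup.of 0)
            = (pgd (k+1)).gens (k+1) from ((pgd_gens_succ_le k le_rfl).trans (pgd_bridge k)).symm]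
        exact hyp (k+1) (by omega)
      · rw [show (inY (powHom ((pgd k).gens (k+1))) bsaHom) (PresentedGroup.of 1)
            = (pgd (k+1)).gens (k+2) from (pgd_gens_succ_top k le_rfl).symm]
        exact hyp (k+2) (by omega)


/-! ### Assembling the Higman group -/

lemma conj_map {G H : Type*} [Group G] [Group H] (h : G →* H) {u v : G}
    (huv : u * v * u⁻¹ = v ^ 2) : h u * h v * (h u)⁻¹ = (h v) ^ 2 := by
  rw [← map_inv, ← map_mul, ← map_mul, huv, map_pow]

section Higman

variable (n : ℕ) (hn : 5 ≤ n) (i : ZMod n)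

lemma hig_rel (v : ZMod n) : (PresentedGroup.of (rels := higmanRels n) v) * PresentedGroup.of (v+1)
    * (PresentedGroup.of v)⁻¹ = (PresentedGroup.of (v+1)) ^ 2 := by
  have h : (PresentedGroup.mk (higmanRels n))
      (FreeGroup.of v * FreeGroup.of (v+1) * (FreeGroup.of v)⁻¹ * ((FreeGroup.of (v+1))⁻¹) ^ 2)
        = 1 := by
    apply (QuotientGroup.eq_one_iff _).2
    exact Subgroup.subset_normalClosure ⟨v, rfl⟩
  simp only [map_mul, map_inv, map_pow] at h
  have h2 : PresentedGroup.of (rels := higmanRels n) v * PresentedGroup.of (v+1) *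
      (PresentedGroup.of v)⁻¹ * ((PresentedGroup.of (v+1))⁻¹) ^ 2 = 1 := h
  have := mul_eq_one_iff_eq_inv.1 h2
  rw [this]
  group

/-- the first leg of the final amalgam -/
def ψA : FreeGroup (Fin 2) →* (pgd 1).G :=
  FreeGroup.lift (fun j : Fin 2 => if j = 0 then (pgd 1).gens 0 else (pgd 1).gens 2)

/-- the second leg of the final amalgam -/
def ψB : FreeGroup (Fin 2) →* (pgd (n-3)).G :=
  FreeGroup.lift (fun j : Fin 2 => if j = 0 then (pgd (n-3)).gens (n-2) else (pgd (n-3)).gens 0)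

lemma ψA_injective : Function.Injective (ψA) := pgd_free 0

include hn in
lemma ψB_injective : Function.Injective (ψB n) := by
  have key := pgd_free (n-4)
  rw [show n - 4 + 1 = n - 3 from by omega, show n - 4 + 2 = n - 2 from by omega] at key
  have hcomp : ψB n = (FreeGroup.lift (fun j : Fin 2 =>
      if j = 0 then (pgd (n-3)).gens 0 else (pgd (n-3)).gens (n-2))).comp
      (FreeGroup.freeGroupCongr (Equiv.swap (0 : Fin 2) 1)).toMonoidHom := by
    refine FreeGroup.ext_hom _ _ (fun x => ?_)
    rcases fin2_cases x with rfl | rfl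
    · simp [ψB, Equiv.swap_apply_left]
    · simp [ψB, Equiv.swap_apply_right]
  rw [hcomp, MonoidHom.coe_comp]
  exact key.comp (MulEquiv.injective _)

/-- the model of the Higman group as an amalgam of two path groups -/
def HigModel : Type := Amal (ψA) (ψB n)

instance : Group (HigModel n) := inferInstanceAs (Group (Amal _ _))

/-- left inclusion -/
def inA : (pgd 1).G →* HigModel n := inX (ψA) (ψB n)
/-- right inclusion -/
def inB : (pgd (n-3)).G →* HigModel n := inY (ψA) (ψB n)

lemma bridge0 : inA n ((pgd 1).gens 0) = inB n ((pgd (n-3)).gens (n-2)) := by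
  have := amal_comm (ψA) (ψB n) (FreeGroup.of 0)
  simp [ψA, ψB] at this; exact this

lemma bridge2 : inA n ((pgd 1).gens 2) = inB n ((pgd (n-3)).gens 0) := by
  have := amal_comm (ψA) (ψB n) (FreeGroup.of 1)
  simp [ψA, ψB] at this; exact this

/-- vertex images in the model -/
def FCn : ℕ → HigModel n := fun m =>
  if m ≤ 2 then inA n ((pgd 1).gens m) else inB n ((pgd (n-3)).gens (m-2))

/-- generator images for the map from the Higman group to the model -/
def fCn : ZMod n → HigModel n := fun v => FCn n ((v - i).val)


include hn in
lemma fCn_rel (v : ZMod n) :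
    fCn n i v * fCn n i (v+1) * (fCn n i v)⁻¹ = (fCn n i (v+1)) ^ 2 := by
  haveI : NeZero n := ⟨by omega⟩
  simp only [fCn]
  set m := (v - i).val with hm
  have hmlt : m < n := ZMod.val_lt _
  have hvi : ((m : ℕ) : ZMod n) = v - i := by rw [hm]; exact ZMod.natCast_rightInverse _
  have hsucc : v + 1 - i = (v - i) + 1 := by ring
  by_cases htop : m = n - 1
  · -- wrap-around case
    have h0 : (v + 1 - i).val = 0 := by
      have he : v + 1 - i = 0 := by
        rw [hsucc, ← hvi, htop,
          show ((n - 1 : ℕ) : ZMod n) + 1 = ((n - 1 + 1 : ℕ) : ZMod n) from by push_cast; ring,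
          show n - 1 + 1 = n from by omega, ZMod.natCast_self]
      rw [he, ZMod.val_zero]
    rw [h0, htop]
    rw [show FCn n (n-1) = inB n ((pgd (n-3)).gens (n-1-2)) from if_neg (by omega),
        show FCn n 0 = inA n ((pgd 1).gens 0) from if_pos (by omega),
        bridge0, show n - 1 - 2 = n - 3 from by omega]
    have hrel := pgd_rel (n-3) (n-3) le_rfl
    rw [show n - 3 + 1 = n - 2 from by omega] at hrel
    exact conj_map _ hrel
  · have h1 : (v + 1 - i).val = m + 1 := by
      rw [hsucc, ← hvi,
        show ((m : ℕ) : ZMod n) + 1 = ((m + 1 : ℕ) : ZMod n) from by push_cast; ring]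
      exact ZMod.val_cast_of_lt (by omega)
    rw [h1]
    rcases Nat.lt_or_ge m 2 with hc | hc
    · rw [show FCn n m = inA n ((pgd 1).gens m) from if_pos (by omega),
          show FCn n (m+1) = inA n ((pgd 1).gens (m+1)) from if_pos (by omega)]
      exact conj_map _ (pgd_rel 1 m (by omega))
    rcases Nat.eq_or_lt_of_le hc with hc2 | hc3
    · rw [← hc2]
      rw [show FCn n 2 = inA n ((pgd 1).gens 2) from if_pos (by omega),
          show FCn n 3 = inB n ((pgd (n-3)).gens 1) from if_neg (by omega), bridge2]
      exact conj_map _ (pgd_rel (n-3) 0 (by omega))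
    · rw [show FCn n m = inB n ((pgd (n-3)).gens (m-2)) from if_neg (by omega),
          show FCn n (m+1) = inB n ((pgd (n-3)).gens (m+1-2)) from if_neg (by omega)]
      have hrel := pgd_rel (n-3) (m-2) (by omega)
      rw [show m - 2 + 1 = m + 1 - 2 from by omega] at hrel
      exact conj_map _ hrel

/-- the map from the Higman group to the model -/
def Φn : HigmanGroup n →* HigModel n :=
  PresentedGroup.toGroup (f := fCn n i)
    (by
      rintro r ⟨v, rfl⟩
      simp only [map_mul, map_inv, map_pow, FreeGroup.lift_apply_of]
      rw [show ((fCn n i (v+1))⁻¹) ^ 2 = ((fCn n i (v+1)) ^ 2)⁻¹ from by group,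
        ← fCn_rel n hn i v]
      group)

@[simp] lemma Φn_of (v : ZMod n) : Φn n hn i (PresentedGroup.of v) = fCn n i v :=
  PresentedGroup.toGroup.of _

/-- vertex generators for arc A -/
def tAn : ℕ → HigmanGroup n := fun j => PresentedGroup.of (i + (j : ZMod n))
/-- vertex generators for arc B -/
def tBn : ℕ → HigmanGroup n := fun j => PresentedGroup.of (i + 2 + (j : ZMod n))

lemma tAn_rel : ∀ j, tAn n i j * tAn n i (j+1) * (tAn n i j)⁻¹ = (tAn n i (j+1)) ^ 2 := by
  intro j
  simp only [tAn]
  rw [show i + ((j+1 : ℕ) : ZMod n) = (i + (j : ZMod n)) + 1 from by push_cast; ring]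
  exact hig_rel n _

lemma tBn_rel : ∀ j, tBn n i j * tBn n i (j+1) * (tBn n i j)⁻¹ = (tBn n i (j+1)) ^ 2 := by
  intro j
  simp only [tBn]
  rw [show i + 2 + ((j+1 : ℕ) : ZMod n) = (i + 2 + (j : ZMod n)) + 1 from by push_cast; ring]
  exact hig_rel n _

/-- evaluation hom on arc A -/
def hAn : (pgd 1).G →* HigmanGroup n := (pgdToGroupAux _ (tAn n i) (tAn_rel n i) 1).1

lemma hAn_gens {j : ℕ} (hj : j ≤ 2) : hAn n i ((pgd 1).gens j) = tAn n i j :=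
  (pgdToGroupAux _ (tAn n i) (tAn_rel n i) 1).2 j (by omega)

/-- evaluation hom on arc B -/
def hBn : (pgd (n-3)).G →* HigmanGroup n := (pgdToGroupAux _ (tBn n i) (tBn_rel n i) (n-3)).1

lemma hBn_gens {j : ℕ} (hj : j ≤ n - 2) : hBn n i ((pgd (n-3)).gens j) = tBn n i j :=
  (pgdToGroupAux _ (tBn n i) (tBn_rel n i) (n-3)).2 j (by omega)

include hn in
lemma cast_n_sub_two : (2 : ZMod n) + ((n - 2 : ℕ) : ZMod n) = 0 := by
  rw [show (2 : ZMod n) = ((2 : ℕ) : ZMod n) from by push_cast; ring, ← Nat.cast_add,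
    show 2 + (n - 2) = n from by omega, ZMod.natCast_self]

include hn in
lemma ΨCompat : (hAn n i).comp (ψA) = (hBn n i).comp (ψB n) := by
  refine FreeGroup.ext_hom _ _ (fun x => ?_)
  rcases fin2_cases x with rfl | rfl
  · simp only [MonoidHom.comp_apply, ψA, ψB, FreeGroup.lift_apply_of, eq_self_iff_true, if_true]
    rw [hAn_gens n i (by omega), hBn_gens n i (le_refl _)]
    simp only [tAn, tBn]
    rw [show i + 2 + ((n - 2 : ℕ) : ZMod n) = i + ((2 : ZMod n) + ((n - 2 : ℕ) : ZMod n))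
        from by ring, cast_n_sub_two n hn]
    norm_num
  · simp only [MonoidHom.comp_apply, ψA, ψB, FreeGroup.lift_apply_of,
      if_neg (by decide : ¬(1 : Fin 2) = 0)]
    rw [hAn_gens n i (by omega), hBn_gens n i (by omega)]
    simp only [tAn, tBn]
    norm_num

/-- the map from the model to the Higman group -/
def Ψn : HigModel n →* HigmanGroup n :=
  amalLift _ _ (hAn n i) (hBn n i) (ΨCompat n hn i)

@[simp] lemma Ψn_inA (x : (pgd 1).G) : Ψn n hn i (inA n x) = hAn n i x :=
  amalLift_inX _ _ _ _ _ _

@[simp] lemma Ψn_inB (x : (pgd (n-3)).G) : Ψn n hn i (inB n x) = hBn n i x :=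
  amalLift_inY _ _ _ _ _ _

include hn in
lemma ΨΦ_id : (Ψn n hn i).comp (Φn n hn i) = MonoidHom.id _ := by
  haveI : NeZero n := ⟨by omega⟩
  refine PresentedGroup.ext (fun v => ?_)
  simp only [MonoidHom.comp_apply, MonoidHom.id_apply, Φn_of]
  show Ψn n hn i (FCn n ((v - i).val)) = PresentedGroup.of v
  set m := (v - i).val with hm
  have hmlt : m < n := ZMod.val_lt _
  have hvi : ((m : ℕ) : ZMod n) = v - i := by rw [hm]; exact ZMod.natCast_rightInverse _
  rcases Nat.lt_or_ge m 3 with hc | hc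
  · rw [show FCn n m = inA n ((pgd 1).gens m) from if_pos (by omega), Ψn_inA,
      hAn_gens n i (by omega)]
    simp only [tAn]
    rw [hvi]
    norm_num
  · rw [show FCn n m = inB n ((pgd (n-3)).gens (m-2)) from if_neg (by omega), Ψn_inB,
      hBn_gens n i (by omega)]
    simp only [tBn]
    rw [show i + 2 + ((m - 2 : ℕ) : ZMod n) = i + (((2 : ℕ) + (m - 2 : ℕ) : ℕ) : ZMod n)
        from by push_cast; ring, show (2 : ℕ) + (m - 2) = m from by omega, hvi]
    norm_num

include hn in
lemma ΦΨ_id : (Φn n hn i).comp (Ψn n hn i) = MonoidHom.id _ := by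
  haveI : NeZero n := ⟨by omega⟩
  refine amal_hom_ext _ _ ?_ ?_
  · refine pgd_hom_ext 1 _ _ (fun j hj => ?_)
    show Φn n hn i (Ψn n hn i (inA n ((pgd 1).gens j))) = inA n ((pgd 1).gens j)
    rw [Ψn_inA, hAn_gens n i (by omega)]
    simp only [tAn, Φn_of, fCn]
    rw [show i + ((j : ℕ) : ZMod n) - i = ((j : ℕ) : ZMod n) from by ring,
      ZMod.val_cast_of_lt (by omega)]
    exact if_pos (by omega)
  · refine pgd_hom_ext (n-3) _ _ (fun j hj => ?_)
    have hj' : j ≤ n - 2 := by omega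
    show Φn n hn i (Ψn n hn i (inB n ((pgd (n-3)).gens j))) = inB n ((pgd (n-3)).gens j)
    rw [Ψn_inB, hBn_gens n i hj']
    simp only [tBn, Φn_of, fCn]
    rcases Nat.lt_or_ge j (n-2) with hlt | hge
    · rw [show i + 2 + ((j : ℕ) : ZMod n) - i = (((2 + j : ℕ) : ℕ) : ZMod n) from by
          push_cast; ring,
        ZMod.val_cast_of_lt (by omega)]
      rcases Nat.eq_zero_or_pos j with rfl | hpos
      · rw [show FCn n (2 + 0) = inA n ((pgd 1).gens 2) from if_pos (by omega)]
        exact bridge2 n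
      · rw [show FCn n (2 + j) = inB n ((pgd (n-3)).gens (2 + j - 2)) from if_neg (by omega),
          show 2 + j - 2 = j from by omega]
    · have hjeq : j = n - 2 := by omega
      subst hjeq
      rw [show i + 2 + ((n - 2 : ℕ) : ZMod n) - i
          = (2 : ZMod n) + ((n - 2 : ℕ) : ZMod n) from by ring, cast_n_sub_two n hn]
      rw [ZMod.val_zero]
      rw [show FCn n 0 = inA n ((pgd 1).gens 0) from if_pos (by omega)]
      exact bridge0 n

end Higman

end Helper

open Helper in
theorem bs12_embeds_in_higman (n : ℕ) (hn : 5 ≤ n) (i : ZMod n) :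
    ∃ φ : BS12 →* HigmanGroup n,
      φ (PresentedGroup.of 0) = PresentedGroup.of i ∧
      φ (PresentedGroup.of 1) = PresentedGroup.of (i + 1) ∧
      Function.Injective φ ∧
      Nonempty (BS12 ≃*
        (Subgroup.closure
          {PresentedGroup.of (rels := higmanRels n) i,
           PresentedGroup.of (rels := higmanRels n) (i + 1)} : Subgroup (HigmanGroup n))) := by
  classical
  set e : BS12 →* (pgd 1).G := stepInX 0 with he_def
  set φ : BS12 →* HigmanGroup n := (Ψn n hn i).comp ((inA n).comp e) with hφ_def
  have he0 : e bsa = (pgd 1).gens 0 := by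
    rw [pgd_gens_succ_le 0 (by omega), pgd_gens_zero_zero]
    rfl
  have he1 : e bsb = (pgd 1).gens 1 := by
    rw [pgd_gens_succ_le 0 (by omega), pgd_gens_zero_pos le_rfl]
    rfl
  have hφ0 : φ bsa = PresentedGroup.of (rels := higmanRels n) i := by
    rw [hφ_def]
    simp only [MonoidHom.comp_apply]
    rw [he0, Ψn_inA, hAn_gens n i (by omega)]
    simp only [tAn]
    norm_num
  have hφ1 : φ bsb = PresentedGroup.of (rels := higmanRels n) (i + 1) := by
    rw [hφ_def]
    simp only [MonoidHom.comp_apply]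
    rw [he1, Ψn_inA, hAn_gens n i (by omega)]
    simp only [tAn]
    norm_num
  have hΨinj : Function.Injective (Ψn n hn i) := by
    intro x y hxy
    have h1 := DFunLike.congr_fun (ΦΨ_id n hn i) x
    have h2 := DFunLike.congr_fun (ΦΨ_id n hn i) y
    simp only [MonoidHom.comp_apply, MonoidHom.id_apply] at h1 h2
    rw [← h1, ← h2, hxy]
  have hinAinj : Function.Injective (inA n) :=
    inX_injective (ψA_injective) (ψB_injective n hn)
  have heinj : Function.Injective e := by
    have h1 : Function.Injective (powHom ((pgd 0).gens 1)) := by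
      rw [pgd_gens_zero_pos le_rfl]
      exact bsbHom_injective
    exact inX_injective h1 bsaHom_injective
  have hφinj : Function.Injective φ := hΨinj.comp (hinAinj.comp heinj)
  have hrange : φ.range = Subgroup.closure
      {PresentedGroup.of (rels := higmanRels n) i,
       PresentedGroup.of (rels := higmanRels n) (i + 1)} := by
    have hrg : Set.range (PresentedGroup.of (rels := bsRels)) = {bsa, bsb} := by
      ext z
      constructor
      · rintro ⟨j, rfl⟩
        rcases fin2_cases j with rfl | rfl
        · exact Or.inl rfl
        · exact Or.inr rfl
      · rintro (rfl | rfl)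
        · exact ⟨0, rfl⟩
        · exact ⟨1, rfl⟩
    calc φ.range = Subgroup.map φ ⊤ := MonoidHom.range_eq_map φ
      _ = Subgroup.map φ (Subgroup.closure {bsa, bsb}) := by
          rw [← hrg, PresentedGroup.closure_range_of]
      _ = Subgroup.closure (φ '' {bsa, bsb}) := MonoidHom.map_closure φ _
      _ = _ := by rw [Set.image_pair, hφ0, hφ1]
  exact ⟨φ, hφ0, hφ1, hφinj, ⟨(MonoidHom.ofInjective hφinj).trans
    (MulEquiv.subgroupCongr hrange)⟩⟩
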